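/- The complement of the origin in the cone, V ∖ {(0,0)}, is homeomorphic to (ℝ⁴ ∖ {0}) × S². (In particular, the punctured neighborhood of a threefold nodal singularity is the real cone over S³ × S².) -/

import Mathlib

noncomputable section Stmt3Aux

open Quaternion

/-- Quaternion from a 4-tuple. -/
def qmk (f : Fin 4 → ℝ) : Quaternion ℝ := ⟨f 0, f 1, f 2, f 3⟩

/-- 4-tuple from a quaternion. -/
def qtup (a : Quaternion ℝ) : Fin 4 → ℝ := ![a.re, a.imI, a.imJ, a.imK]

lemma qmk_qtup (a : Quaternion ℝ) : qmk (qtup a) = a := by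
  ext <;> simp [qmk, qtup]

lemma qtup_qmk (f : Fin 4 → ℝ) : qtup (qmk f) = f := by
  funext i; fin_cases i <;> simp [qmk, qtup]

lemma qmk_inj : Function.Injective qmk :=
  Function.LeftInverse.injective qtup_qmk

lemma qmk_ne_zero {f : Fin 4 → ℝ} (hf : f ≠ 0) : qmk f ≠ 0 := by
  intro h
  apply hf
  have : qmk f = qmk 0 := by rw [h]; ext <;> simp [qmk]
  exact qmk_inj this

lemma continuous_qmk : Continuous qmk :=
  Quaternion.linearIsometryEquivTuple.symm.continuous.comp
    (PiLp.continuous_toLp 2 fun _ : Fin 4 => ℝ)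

lemma continuous_qtup : Continuous qtup := by
  apply continuous_pi
  intro i
  fin_cases i <;> simp [qtup]
  · exact Quaternion.continuous_re
  · exact Quaternion.continuous_imI
  · exact Quaternion.continuous_imJ
  · exact Quaternion.continuous_imK

lemma sum_sq_eq (f : Fin 4 → ℝ) : ∑ j, f j ^ 2 = normSq (qmk f) := by
  rw [Fin.sum_univ_four, Quaternion.normSq_def']
  rfl

lemma sum_mul_eq (f g : Fin 4 → ℝ) :
    ∑ j, f j * g j = (qmk f * star (qmk g)).re := by
  rw [Fin.sum_univ_four, Quaternion.re_mul, Quaternion.re_star, Quaternion.imI_star,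
    Quaternion.imJ_star, Quaternion.imK_star]
  simp [qmk]

lemma re_mul_star_mul (a c : Quaternion ℝ) :
    (a * star (a * c)).re = normSq a * c.re := by
  simp only [Quaternion.re_mul, Quaternion.imI_mul, Quaternion.imJ_mul, Quaternion.imK_mul,
    Quaternion.re_star, Quaternion.imI_star, Quaternion.imJ_star, Quaternion.imK_star,
    Quaternion.normSq_def']
  obtain ⟨a1, a2, a3, a4⟩ := a
  obtain ⟨c1, c2, c3, c4⟩ := c
  simp [Quaternion.re_mul, Quaternion.imI_mul, Quaternion.imJ_mul, Quaternion.imK_mul,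
    Quaternion.normSq_def']
  ring

lemma star_mul_re (a b : Quaternion ℝ) : (star a * b).re = (a * star b).re := by
  simp [Quaternion.re_mul]

/-- the "quotient" quaternion `u⁻¹ * v` written explicitly. -/
def wq (x : (Fin 4 → ℝ) × (Fin 4 → ℝ)) : Quaternion ℝ :=
  (normSq (qmk x.1))⁻¹ • (star (qmk x.1) * qmk x.2)

lemma mul_wq (x : (Fin 4 → ℝ) × (Fin 4 → ℝ)) (hx : x.1 ≠ 0) :
    qmk x.1 * wq x = qmk x.2 := by
  rw [wq, mul_smul_comm, ← mul_assoc, Quaternion.self_mul_star,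
    Quaternion.coe_mul_eq_smul, smul_smul,
    inv_mul_cancel₀ (Quaternion.normSq_ne_zero.2 (qmk_ne_zero hx)), one_smul]

lemma continuous_qstar : Continuous (star : Quaternion ℝ → Quaternion ℝ) := by
  have h : (star : Quaternion ℝ → Quaternion ℝ)
      = fun a => qmk ![a.re, -a.imI, -a.imJ, -a.imK] := by
    funext a; ext <;> simp [qmk]
  rw [h]
  refine continuous_qmk.comp (continuous_pi fun i => ?_)
  fin_cases i <;> simp
  exacts [Quaternion.continuous_re, Quaternion.continuous_imI.neg,
    Quaternion.continuous_imJ.neg, Quaternion.continuous_imK.neg]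

lemma norm_one_iff (s : EuclideanSpace ℝ (Fin 3)) :
    ‖s‖ = 1 ↔ s 0 ^ 2 + s 1 ^ 2 + s 2 ^ 2 = 1 := by
  rw [EuclideanSpace.norm_eq, Fin.sum_univ_three]
  simp only [Real.norm_eq_abs, sq_abs]
  exact Real.sqrt_eq_one

/-- forward map, sphere part. -/
def fwdE (x : (Fin 4 → ℝ) × (Fin 4 → ℝ)) : EuclideanSpace ℝ (Fin 3) :=
  (WithLp.equiv 2 (Fin 3 → ℝ)).symm ![(wq x).imI, (wq x).imJ, (wq x).imK]

/-- backward map. -/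
def bwdV (u : Fin 4 → ℝ) (s : EuclideanSpace ℝ (Fin 3)) :
    (Fin 4 → ℝ) × (Fin 4 → ℝ) :=
  (u, qtup (qmk u * qmk ![0, s 0, s 1, s 2]))

def realConeAux : Set ((Fin 4 → ℝ) × (Fin 4 → ℝ)) :=
  {uv | ∑ j, uv.1 j ^ 2 = ∑ j, uv.2 j ^ 2 ∧ ∑ j, uv.1 j * uv.2 j = 0}

lemma fst_ne_zero {x : (Fin 4 → ℝ) × (Fin 4 → ℝ)}
    (hx : x ∈ realConeAux) (hx0 : x ≠ 0) : x.1 ≠ 0 := by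
  intro h
  apply hx0
  have h2 : qmk x.2 = 0 := by
    have h1 := hx.1
    rw [h, sum_sq_eq x.2] at h1
    simp only [Pi.zero_apply, ne_eq, OfNat.ofNat_ne_zero, not_false_eq_true,
      zero_pow, Finset.sum_const_zero] at h1
    exact Quaternion.normSq_eq_zero.1 h1.symm
  have h2' : x.2 = 0 := by
    apply qmk_inj
    rw [h2]; ext <;> simp [qmk]
  exact Prod.ext h h2'

lemma wq_re {x : (Fin 4 → ℝ) × (Fin 4 → ℝ)} (hx : x ∈ realConeAux) :
    (wq x).re = 0 := by
  have h := hx.2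
  rw [sum_mul_eq, ← star_mul_re] at h
  simp [wq, h]

lemma wq_normSq {x : (Fin 4 → ℝ) × (Fin 4 → ℝ)} (hx : x ∈ realConeAux)
    (hu : x.1 ≠ 0) : normSq (wq x) = 1 := by
  have h := hx.1
  rw [sum_sq_eq, sum_sq_eq] at h
  have hn : normSq (qmk x.1) ≠ 0 := Quaternion.normSq_ne_zero.2 (qmk_ne_zero hu)
  rw [wq, Quaternion.normSq_smul, map_mul, Quaternion.normSq_star, ← h]
  field_simp

lemma fwdE_norm {x : (Fin 4 → ℝ) × (Fin 4 → ℝ)} (hx : x ∈ realConeAux)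
    (hu : x.1 ≠ 0) : ‖fwdE x‖ = 1 := by
  rw [norm_one_iff]
  have h1 := wq_normSq hx hu
  have h2 := wq_re hx
  rw [Quaternion.normSq_def', h2] at h1
  simpa [fwdE] using h1

lemma bwdV_mem {u : Fin 4 → ℝ} {s : EuclideanSpace ℝ (Fin 3)}
    (hu : u ≠ 0) (hs : ‖s‖ = 1) : bwdV u s ∈ realConeAux := by
  set c : Quaternion ℝ := qmk ![0, s 0, s 1, s 2] with hc
  have hcre : c.re = 0 := by simp [hc, qmk]
  have hcn : normSq c = 1 := by
    rw [Quaternion.normSq_def']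
    have := (norm_one_iff s).1 hs
    simpa [hc, qmk] using this
  constructor
  · show ∑ j, u j ^ 2 = ∑ j, (bwdV u s).2 j ^ 2
    rw [sum_sq_eq, sum_sq_eq]
    show normSq (qmk u) = normSq (qmk (qtup (qmk u * c)))
    rw [qmk_qtup, map_mul, hcn, mul_one]
  · show ∑ j, u j * (bwdV u s).2 j = 0
    rw [sum_mul_eq]
    show (qmk u * star (qmk (qtup (qmk u * c)))).re = 0
    rw [qmk_qtup, re_mul_star_mul, hcre, mul_zero]

lemma bwdV_ne_zero {u : Fin 4 → ℝ} (s : EuclideanSpace ℝ (Fin 3))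
    (hu : u ≠ 0) : bwdV u s ≠ 0 := by
  intro h
  exact hu (congrArg Prod.fst h)

lemma left_inv {x : (Fin 4 → ℝ) × (Fin 4 → ℝ)} (hx : x ∈ realConeAux)
    (hu : x.1 ≠ 0) : bwdV x.1 (fwdE x) = x := by
  have hq : qmk ![0, fwdE x 0, fwdE x 1, fwdE x 2] = wq x := by
    ext <;> simp [qmk, fwdE, wq_re hx]
  have : (bwdV x.1 (fwdE x)).2 = x.2 := by
    show qtup (qmk x.1 * qmk ![0, fwdE x 0, fwdE x 1, fwdE x 2]) = x.2
    rw [hq, mul_wq x hu, qtup_qmk]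
  exact Prod.ext rfl this

lemma right_inv (u : Fin 4 → ℝ) (s : EuclideanSpace ℝ (Fin 3))
    (hu : u ≠ 0) : fwdE (bwdV u s) = s := by
  set c : Quaternion ℝ := qmk ![0, s 0, s 1, s 2] with hc
  have hn : normSq (qmk u) ≠ 0 := Quaternion.normSq_ne_zero.2 (qmk_ne_zero hu)
  have hw : wq (bwdV u s) = c := by
    show (normSq (qmk u))⁻¹ • (star (qmk u) * qmk (qtup (qmk u * c))) = c
    rw [qmk_qtup, ← mul_assoc, Quaternion.star_mul_self,
      Quaternion.coe_mul_eq_smul, smul_smul, inv_mul_cancel₀ hn, one_smul]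
  ext i
  fin_cases i <;> simp [fwdE, hw, hc, qmk]

lemma continuous_eval3 (i : Fin 3) :
    Continuous fun s : EuclideanSpace ℝ (Fin 3) => s i :=
  (continuous_apply i).comp (PiLp.continuous_ofLp 2 fun _ : Fin 3 => ℝ)

end Stmt3Aux

/-- The real cone `V = {(u,v) : Σ uⱼ² = Σ vⱼ², Σ uⱼvⱼ = 0}`. -/
def realCone : Set ((Fin 4 → ℝ) × (Fin 4 → ℝ)) :=
  {uv | ∑ j, uv.1 j ^ 2 = ∑ j, uv.2 j ^ 2 ∧ ∑ j, uv.1 j * uv.2 j = 0}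

theorem stmt3 :
    Nonempty (↥(realCone \ {0}) ≃ₜ
      (↥{u : Fin 4 → ℝ | u ≠ 0} ×
       ↥(Metric.sphere (0 : EuclideanSpace ℝ (Fin 3)) 1))) := by
  have hmem : ∀ x : ↥(realCone \ ({0} : Set _)), x.1 ∈ realConeAux := fun x => x.2.1
  have hne : ∀ x : ↥(realCone \ ({0} : Set _)), x.1.1 ≠ 0 := fun x =>
    fst_ne_zero x.2.1 x.2.2
  refine ⟨Homeomorph.mk (Equiv.mk
    (fun x => (⟨x.1.1, hne x⟩,
      ⟨fwdE x.1, mem_sphere_zero_iff_norm.2 (fwdE_norm (hmem x) (hne x))⟩))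
    (fun z => ⟨bwdV z.1.1 z.2.1,
      ⟨bwdV_mem z.1.2 (mem_sphere_zero_iff_norm.1 z.2.2), bwdV_ne_zero _ z.1.2⟩⟩)
    (fun x => Subtype.ext (left_inv (hmem x) (hne x)))
    (fun z => Prod.ext (Subtype.ext rfl)
      (Subtype.ext (right_inv z.1.1 z.2.1 z.1.2)))) ?_ ?_⟩
  · have hw : Continuous fun x : ↥(realCone \ ({0} : Set _)) => wq x.1 := by
      apply Continuous.fun_smul
      · apply Continuous.inv₀
        · exact Quaternion.continuous_normSq.comp (continuous_qmk.comp
            (continuous_fst.comp continuous_subtype_val))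
        · intro x
          exact Quaternion.normSq_ne_zero.2 (qmk_ne_zero (hne x))
      · exact (continuous_qstar.comp (continuous_qmk.comp
          (continuous_fst.comp continuous_subtype_val))).mul
          (continuous_qmk.comp (continuous_snd.comp continuous_subtype_val))
    apply Continuous.prodMk
    · exact (continuous_fst.comp continuous_subtype_val).subtype_mk _
    · apply Continuous.subtype_mk
      apply (PiLp.continuous_toLp 2 fun _ : Fin 3 => ℝ).comp
      apply continuous_pi
      intro i
      fin_cases i <;> simp
      exacts [Quaternion.continuous_imI.comp hw, Quaternion.continuous_imJ.comp hw,
        Quaternion.continuous_imK.comp hw]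
  · have hb : Continuous fun z : ↥{u : Fin 4 → ℝ | u ≠ 0} ×
        ↥(Metric.sphere (0 : EuclideanSpace ℝ (Fin 3)) 1) => bwdV z.1.1 z.2.1 := by
      have h1 : Continuous fun z : ↥{u : Fin 4 → ℝ | u ≠ 0} ×
          ↥(Metric.sphere (0 : EuclideanSpace ℝ (Fin 3)) 1) => (z.1.1 : Fin 4 → ℝ) :=
        continuous_subtype_val.comp continuous_fst
      have h3 : Continuous fun z : ↥{u : Fin 4 → ℝ | u ≠ 0} ×
          ↥(Metric.sphere (0 : EuclideanSpace ℝ (Fin 3)) 1) =>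
          (![0, z.2.1 0, z.2.1 1, z.2.1 2] : Fin 4 → ℝ) := by
        apply continuous_pi
        intro i
        fin_cases i <;> simp
        exacts [continuous_const,
          (continuous_eval3 0).comp (continuous_subtype_val.comp continuous_snd),
          (continuous_eval3 1).comp (continuous_subtype_val.comp continuous_snd),
          (continuous_eval3 2).comp (continuous_subtype_val.comp continuous_snd)]
      exact h1.prodMk (continuous_qtup.comp
        ((continuous_qmk.comp h1).mul (continuous_qmk.comp h3)))
    exact hb.subtype_mk _
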